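/- Let G be a finite group acting transitively on a finite nonempty set X, let p be a prime, P a Sylow p-subgroup of G, and N = N_G(P). If p divides the cardinality of X, then every N-orbit of X has cardinality divisible by p. -/

import Mathlib

/-- If `G` acts transitively on `X` and `p ∣ |X|`, then every orbit of
`N = N_G(P)` on `X` has cardinality divisible by `p`. -/
theorem norbit_card_dvd_of_dvd {p : ℕ} [Fact p.Prime] {G : Type*} [Group G] [Fintype G]
    {X : Type*} [Fintype X] [Nonempty X] [MulAction G X] [MulAction.IsPretransitive G X]
    (P : Sylow p G) (h : p ∣ Nat.card X) (x : X) :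
    p ∣ Nat.card (MulAction.orbit (Subgroup.normalizer ((P : Subgroup G) : Set G)) x) := by
  set N := Subgroup.normalizer ((P : Subgroup G) : Set G) with hN
  -- `P` has no fixed points on `X`, since a fixed point would have stabilizer
  -- containing `P`, forcing `p ∤ [G : stabilizer] = |X|`.
  have hfix : ∀ y : X, ¬ (∀ g ∈ (P : Subgroup G), g • y = y) := by
    intro y hy
    have hle : (P : Subgroup G) ≤ MulAction.stabilizer G y := fun g hg => hy g hg
    have h1 : (MulAction.stabilizer G y).index = Nat.card X :=
      MulAction.index_stabilizer_of_transitive G y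
    have h2 : (MulAction.stabilizer G y).index ∣ (P : Subgroup G).index :=
      Subgroup.index_dvd_of_le hle
    exact P.not_dvd_index (dvd_trans (h1 ▸ h) h2)
  -- `K` is `P` viewed inside `N`: a `p`-group acting on the `N`-orbit of `x`.
  set K := (P : Subgroup G).subgroupOf N with hK
  have hpK : IsPGroup p K :=
    P.2.of_equiv (Subgroup.subgroupOfEquivOfLe Subgroup.le_normalizer).symm
  have key := hpK.card_modEq_card_fixedPoints (MulAction.orbit N x)
  have hempty : Nat.card (MulAction.fixedPoints K (MulAction.orbit N x)) = 0 := by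
    rw [Nat.card_eq_zero]
    left
    rw [isEmpty_iff]
    rintro ⟨⟨y, hy⟩, hyfix⟩
    refine hfix y (fun g hg => ?_)
    have hgN : g ∈ N := Subgroup.le_normalizer hg
    have := hyfix ⟨⟨g, hgN⟩, hg⟩
    exact congrArg Subtype.val this
  rw [hempty] at key
  exact (Nat.modEq_zero_iff_dvd).mp key
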